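/- arXiv:2506.07622 — 8 statements merged into one kernel-verified Lean document; each statement's English description precedes it below -/
import Mathlib

section
/- Let Π be a symmetric (1+ℓ)×(1+ℓ) real matrix partitioned with Π₁₁ ∈ ℝ, Π₂₂ ∈ ℝ^{ℓ×ℓ}, such that Π₂₂ is negative definite and the Schur complement Π₁₁ - Π₁₂Π₂₂⁻¹Π₂₁ ≥ 0. Then the set Z(Π) = { v ∈ ℝ^ℓ : [1; v]ᵀ Π [1; v] ≥ 0 } is nonempty, convex, and bounded. -/
open Matrix

noncomputable section

/-- For a symmetric Π = [[P11, P21ᵀ],[P21, P22]] with P22 negative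
definite and Schur complement P11 - P21ᵀP22⁻¹P21 ≥ 0, the set
Z(Π) = {v | [1;v]ᵀ Π [1;v] ≥ 0} is nonempty, convex and bounded. -/
theorem stmt0 {l : ℕ}
    (P11 : ℝ) (P21 : Fin l → ℝ) (P22 : Matrix (Fin l) (Fin l) ℝ)
    (hP22 : (-P22).PosDef)
    (hschur : 0 ≤ P11 - P21 ⬝ᵥ P22⁻¹.mulVec P21) :
    let Z : Set (Fin l → ℝ) :=
      {v | 0 ≤ P11 + 2 * (P21 ⬝ᵥ v) + v ⬝ᵥ P22.mulVec v}
    Z.Nonempty ∧ Convex ℝ Z ∧ Bornology.IsBounded Z := by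
  intro Z
  -- symmetry of P22
  have hsym : P22ᵀ = P22 := by
    have h := hP22.1.neg
    simp only [neg_neg] at h
    simpa using h.eq
  -- invertibility
  have hdet : IsUnit P22.det := by
    have h1 : IsUnit (-P22).det := hP22.det_pos.ne'.isUnit
    have h2 : IsUnit P22 := by simpa using ((Matrix.isUnit_iff_isUnit_det _).2 h1).neg
    exact (Matrix.isUnit_iff_isUnit_det _).1 h2
  set v₀ : Fin l → ℝ := P22⁻¹ *ᵥ P21 with hv₀def
  have hv0 : P22 *ᵥ v₀ = P21 := by
    rw [hv₀def, Matrix.mulVec_mulVec, Matrix.mul_nonsing_inv _ hdet, Matrix.one_mulVec]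
  -- symmetric bilinear swap
  have hswap : ∀ v w : Fin l → ℝ, v ⬝ᵥ (P22 *ᵥ w) = (P22 *ᵥ v) ⬝ᵥ w := by
    intro v w
    rw [Matrix.dotProduct_mulVec, ← Matrix.mulVec_transpose, hsym]
  -- semidefiniteness of -P22
  have hpsd : ∀ w : Fin l → ℝ, w ⬝ᵥ (P22 *ᵥ w) ≤ 0 := by
    intro w
    have := hP22.posSemidef.re_dotProduct_nonneg w
    simp only [RCLike.re_to_real, Matrix.neg_mulVec, dotProduct_neg, star_trivial] at this
    linarith
  set s : ℝ := P11 - P21 ⬝ᵥ v₀ with hsdef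
  -- key identity
  have key : ∀ v : Fin l → ℝ,
      P11 + 2 * (P21 ⬝ᵥ v) + v ⬝ᵥ (P22 *ᵥ v)
        = s + (v + v₀) ⬝ᵥ (P22 *ᵥ (v + v₀)) := by
    intro v
    have h1 : v₀ ⬝ᵥ (P22 *ᵥ v) = P21 ⬝ᵥ v := by rw [hswap, hv0]
    have h2 : v ⬝ᵥ (P22 *ᵥ v₀) = P21 ⬝ᵥ v := by rw [hv0, dotProduct_comm]
    have h3 : v₀ ⬝ᵥ (P22 *ᵥ v₀) = P21 ⬝ᵥ v₀ := by rw [hv0, dotProduct_comm]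
    simp only [Matrix.mulVec_add, dotProduct_add, add_dotProduct, h1, h2, h3,
      hsdef]
    ring
  have hs : 0 ≤ s := hschur
  refine ⟨⟨-v₀, ?_⟩, ?_, ?_⟩
  · show (0:ℝ) ≤ _
    rw [key]
    simpa using hs
  · -- convexity
    intro u hu v hv a b ha hb hab
    simp only [Z, Set.mem_setOf_eq] at hu hv ⊢
    rw [key] at hu hv ⊢
    set x := u + v₀
    set y := v + v₀
    have hx : a • u + b • v + v₀ = a • x + b • y := by
      obtain rfl : b = 1 - a := by linarith
      simp only [x, y]
      module
    rw [hx]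
    have hxy := hpsd (x - y)
    have expand : (a • x + b • y) ⬝ᵥ (P22 *ᵥ (a • x + b • y))
        = a * (x ⬝ᵥ (P22 *ᵥ x)) + b * (y ⬝ᵥ (P22 *ᵥ y)) - a * b * ((x - y) ⬝ᵥ (P22 *ᵥ (x - y))) := by
      have hba : b = 1 - a := by linarith
      have hxy2 : x ⬝ᵥ (P22 *ᵥ y) = y ⬝ᵥ (P22 *ᵥ x) := by
        rw [hswap, dotProduct_comm]
      simp only [Matrix.mulVec_add, Matrix.mulVec_smul, Matrix.mulVec_sub,
        dotProduct_add, add_dotProduct, dotProduct_sub,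
        sub_dotProduct, smul_dotProduct, dotProduct_smul,
        smul_eq_mul, hxy2, hba]
      ring
    rw [expand]
    nlinarith [mul_nonneg ha hb]
  · -- boundedness
    have hf_cont : Continuous fun w : Fin l → ℝ => w ⬝ᵥ ((-P22) *ᵥ w) := by
      simp only [dotProduct, Matrix.mulVec]
      exact continuous_finset_sum _ fun i _ => (continuous_apply i).mul
        (continuous_finset_sum _ fun j _ => (Continuous.mul continuous_const (continuous_apply j)))
    have hf_homog : ∀ (c : ℝ) (w : Fin l → ℝ),
        (c • w) ⬝ᵥ ((-P22) *ᵥ (c • w)) = c ^ 2 * (w ⬝ᵥ ((-P22) *ᵥ w)) := by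
      intro c w
      simp only [Matrix.mulVec_smul, dotProduct_smul, smul_dotProduct,
        smul_eq_mul]
      ring
    have hpos : ∀ w : Fin l → ℝ, w ≠ 0 → 0 < w ⬝ᵥ ((-P22) *ᵥ w) := by
      intro w hw
      have := hP22.re_dotProduct_pos hw
      simpa using this
    have hcoer : ∃ ε > (0:ℝ), ∀ w : Fin l → ℝ, ε * ‖w‖ ^ 2 ≤ w ⬝ᵥ ((-P22) *ᵥ w) := by
      rcases Nat.eq_zero_or_pos l with hl | hl
      · refine ⟨1, one_pos, fun w => ?_⟩
        subst hl
        have hw : w = 0 := Subsingleton.elim _ _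
        subst hw
        rw [Matrix.mulVec_zero, dotProduct_zero, norm_zero]
        norm_num
      · haveI : Nonempty (Fin l) := Fin.pos_iff_nonempty.mp hl
        have hne : (Metric.sphere (0 : Fin l → ℝ) 1).Nonempty :=
          NormedSpace.sphere_nonempty.2 zero_le_one
        obtain ⟨u0, hu0mem, hu0min⟩ :=
          (isCompact_sphere (0 : Fin l → ℝ) 1).exists_isMinOn hne hf_cont.continuousOn
        have hu0norm : ‖u0‖ = 1 := by simpa using hu0mem
        have hu0ne : u0 ≠ 0 := by
          intro h; rw [h, norm_zero] at hu0norm; norm_num at hu0norm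
        refine ⟨u0 ⬝ᵥ ((-P22) *ᵥ u0), hpos u0 hu0ne, fun w => ?_⟩
        rcases eq_or_ne w 0 with rfl | hw
        · simp
        · have hnw : 0 < ‖w‖ := norm_pos_iff.mpr hw
          have hmem : ‖w‖⁻¹ • w ∈ Metric.sphere (0 : Fin l → ℝ) 1 := by
            simp [norm_smul, abs_of_pos (inv_pos.mpr hnw), inv_mul_cancel₀ hnw.ne']
          have this : u0 ⬝ᵥ ((-P22) *ᵥ u0)
              ≤ (‖w‖⁻¹ • w) ⬝ᵥ ((-P22) *ᵥ (‖w‖⁻¹ • w)) := hu0min hmem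
          rw [hf_homog] at this
          have h2 : ‖w‖⁻¹ ^ 2 * (w ⬝ᵥ ((-P22) *ᵥ w)) = (w ⬝ᵥ ((-P22) *ᵥ w)) / ‖w‖ ^ 2 := by
            field_simp
          rw [h2] at this
          rw [le_div_iff₀ (by positivity)] at this
          linarith
    obtain ⟨ε, hε, hcoer⟩ := hcoer
    have hsub : Z ⊆ Metric.closedBall 0 (Real.sqrt (s / ε) + ‖v₀‖) := by
      intro v hvZ
      simp only [Z, Set.mem_setOf_eq] at hvZ
      rw [key] at hvZ
      have hfle : (v + v₀) ⬝ᵥ ((-P22) *ᵥ (v + v₀)) ≤ s := by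
        simp only [Matrix.neg_mulVec, dotProduct_neg]
        linarith
      have h1 : ε * ‖v + v₀‖ ^ 2 ≤ s := le_trans (hcoer (v + v₀)) hfle
      have h2 : ‖v + v₀‖ ^ 2 ≤ s / ε := by
        rw [le_div_iff₀ hε]; linarith
      have h3 : ‖v + v₀‖ ≤ Real.sqrt (s / ε) := by
        rw [show (‖v + v₀‖ : ℝ) = Real.sqrt (‖v + v₀‖ ^ 2) by
          rw [Real.sqrt_sq (norm_nonneg _)]]
        exact Real.sqrt_le_sqrt h2
      have h4 : ‖v‖ ≤ ‖v + v₀‖ + ‖v₀‖ := by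
        calc ‖v‖ = ‖(v + v₀) - v₀‖ := by rw [add_sub_cancel_right]
        _ ≤ ‖v + v₀‖ + ‖v₀‖ := norm_sub_le _ _
      rw [Metric.mem_closedBall, dist_zero_right]
      linarith
    exact Metric.isBounded_closedBall.subset hsub
end
end

section
/- Let N be a symmetric (1+k)×(1+k) real matrix with N₂₂ negative definite and N|N₂₂ := N₁₁ - N₁₂N₂₂⁻¹N₂₁ ≥ 0. Let Γ := { γ ∈ ℝ^k : [1; γ]ᵀ N [1; γ] ≥ 0 }. Then for any fixed vector b ∈ ℝ^k, the supremum of γᵀb over γ ∈ Γ equals -N₁₂N₂₂⁻¹b + sqrt((N|N₂₂) · bᵀ(-N₂₂⁻¹)b). -/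
open Matrix

noncomputable section

private lemma symm_dot {k : ℕ} {M : Matrix (Fin k) (Fin k) ℝ} (hM : Mᵀ = M)
    (x y : Fin k → ℝ) : x ⬝ᵥ M *ᵥ y = y ⬝ᵥ M *ᵥ x := by
  rw [dotProduct_mulVec, ← mulVec_transpose, hM, dotProduct_comm]

/-- Closed form for the supremum of γᵀb over
Γ = {γ | [1;γ]ᵀN[1;γ] ≥ 0}, with N22 negative definite and Schur complement
N|N22 = N11 - N21ᵀN22⁻¹N21 ≥ 0:
sup = -N12N22⁻¹b + √((N|N22)·bᵀ(-N22⁻¹)b). -/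
theorem stmt3 {k : ℕ}
    (N11 : ℝ) (N21 : Fin k → ℝ) (N22 : Matrix (Fin k) (Fin k) ℝ)
    (hN22 : (-N22).PosDef)
    (hschur : 0 ≤ N11 - N21 ⬝ᵥ N22⁻¹.mulVec N21)
    (b : Fin k → ℝ) :
    IsLUB ((fun γ => γ ⬝ᵥ b) ''
        {γ : Fin k → ℝ | 0 ≤ N11 + 2 * (N21 ⬝ᵥ γ) + γ ⬝ᵥ N22.mulVec γ})
      (-(N21 ⬝ᵥ N22⁻¹.mulVec b) +
        Real.sqrt ((N11 - N21 ⬝ᵥ N22⁻¹.mulVec N21) * (b ⬝ᵥ (-N22⁻¹).mulVec b))) := by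
  classical
  set M : Matrix (Fin k) (Fin k) ℝ := -N22 with hMdef
  have hM : M.PosDef := hN22
  have hN22M : N22 = -M := by rw [hMdef, neg_neg]
  have hMsym : Mᵀ = M := by
    have h := hM.isHermitian
    rwa [Matrix.IsHermitian, conjTranspose_eq_transpose_of_trivial] at h
  have hMisym : M⁻¹ᵀ = M⁻¹ := by
    have h := hM.inv.isHermitian
    rwa [Matrix.IsHermitian, conjTranspose_eq_transpose_of_trivial] at h
  have hMinv : M * M⁻¹ = 1 := Matrix.mul_nonsing_inv _ hM.det_pos.ne'.isUnit
  have hN22inv : N22⁻¹ = -M⁻¹ := by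
    apply Matrix.inv_eq_right_inv
    rw [hN22M, Matrix.neg_mul, Matrix.mul_neg, neg_neg, hMinv]
  -- abbreviations
  set c : Fin k → ℝ := M⁻¹ *ᵥ N21 with hc
  set s : ℝ := N11 + N21 ⬝ᵥ M⁻¹ *ᵥ N21 with hsdef
  set q : ℝ := b ⬝ᵥ M⁻¹ *ᵥ b with hqdef
  have hs : 0 ≤ s := by
    rw [hsdef]
    rw [hN22inv, Matrix.neg_mulVec, dotProduct_neg, sub_neg_eq_add] at hschur
    exact hschur
  -- rewrite the goal value
  have hval1 : -(N21 ⬝ᵥ N22⁻¹.mulVec b) = c ⬝ᵥ b := by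
    rw [hN22inv, Matrix.neg_mulVec, dotProduct_neg, neg_neg, symm_dot hMisym, hc]
    exact dotProduct_comm _ _
  have hval2 : N11 - N21 ⬝ᵥ N22⁻¹.mulVec N21 = s := by
    rw [hN22inv, Matrix.neg_mulVec, dotProduct_neg, sub_neg_eq_add, hsdef]
  have hval3 : b ⬝ᵥ (-N22⁻¹).mulVec b = q := by
    rw [hN22inv, neg_neg, hqdef]
  rw [hval1, hval2, hval3]
  -- basic facts
  have hMc : M *ᵥ c = N21 := by rw [hc, mulVec_mulVec, hMinv, one_mulVec]
  have key : ∀ γ : Fin k → ℝ, N11 + 2 * (N21 ⬝ᵥ γ) + γ ⬝ᵥ N22.mulVec γ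
      = s - (γ - c) ⬝ᵥ M *ᵥ (γ - c) := by
    intro γ
    have h1 : γ ⬝ᵥ M *ᵥ c = N21 ⬝ᵥ γ := by rw [hMc, dotProduct_comm]
    have h2 : c ⬝ᵥ M *ᵥ γ = N21 ⬝ᵥ γ := by rw [symm_dot hMsym, h1]
    have h3 : c ⬝ᵥ M *ᵥ c = N21 ⬝ᵥ M⁻¹ *ᵥ N21 := by
      rw [hMc, hc, dotProduct_comm]
    rw [hN22M, Matrix.neg_mulVec, dotProduct_neg]
    rw [mulVec_sub, dotProduct_sub, sub_dotProduct, sub_dotProduct, h1, h2, h3, hsdef]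
    ring
  have hqb : ∀ x : Fin k → ℝ, x ⬝ᵥ M *ᵥ x = 0 → x = 0 := by
    intro x hx
    by_contra hx0
    have := hM.dotProduct_mulVec_pos hx0
    simp only [star_trivial] at this
    exact absurd hx this.ne'
  have hq0b : q = 0 → b = 0 := by
    intro hq
    by_contra hb
    have := hM.inv.dotProduct_mulVec_pos hb
    simp only [star_trivial] at this
    rw [← hqdef] at this
    exact absurd hq this.ne'
  have hqnn : 0 ≤ q := by
    rcases eq_or_ne b 0 with h | h
    · simp [hqdef, h]
    · exact (by simpa [star_trivial, ← hqdef] using hM.inv.dotProduct_mulVec_pos h : (0:ℝ) < q).le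
  -- Cauchy-Schwarz
  have CS : ∀ x : Fin k → ℝ, (x ⬝ᵥ b) ^ 2 ≤ (x ⬝ᵥ M *ᵥ x) * q := by
    intro x
    rcases eq_or_ne q 0 with hq | hq
    · have hb := hq0b hq
      have hxnn : 0 ≤ x ⬝ᵥ M *ᵥ x := by
        rcases eq_or_ne x 0 with h | h
        · simp [h]
        · exact (by simpa [star_trivial] using hM.dotProduct_mulVec_pos h : (0:ℝ) < _).le
      simp [hb, hq]
    · have hqpos : 0 < q := lt_of_le_of_ne hqnn (Ne.symm hq)
      set t : ℝ := (x ⬝ᵥ b) / q with ht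
      set d : Fin k → ℝ := M⁻¹ *ᵥ b with hd
      have hMd : M *ᵥ d = b := by rw [hd, mulVec_mulVec, hMinv, one_mulVec]
      have h1 : x ⬝ᵥ M *ᵥ d = x ⬝ᵥ b := by rw [hMd]
      have h2 : d ⬝ᵥ M *ᵥ x = x ⬝ᵥ b := by rw [symm_dot hMsym, h1]
      have h3 : d ⬝ᵥ M *ᵥ d = q := by rw [hMd, hd, dotProduct_comm, hqdef]
      have hy : 0 ≤ (x - t • d) ⬝ᵥ M *ᵥ (x - t • d) := by
        rcases eq_or_ne (x - t • d) 0 with h | h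
        · simp [h]
        · exact (by simpa [star_trivial] using hM.dotProduct_mulVec_pos h : (0:ℝ) < _).le
      have hexp : (x - t • d) ⬝ᵥ M *ᵥ (x - t • d)
          = x ⬝ᵥ M *ᵥ x - 2 * t * (x ⬝ᵥ b) + t ^ 2 * q := by
        simp only [mulVec_sub, dotProduct_sub, sub_dotProduct, mulVec_smul,
          dotProduct_smul, smul_dotProduct, smul_eq_mul, h1, h2, h3]
        ring
      rw [hexp, ht] at hy
      have : 0 ≤ x ⬝ᵥ M *ᵥ x - (x ⬝ᵥ b) ^ 2 / q := by
        have e : x ⬝ᵥ M *ᵥ x - 2 * ((x ⬝ᵥ b) / q) * (x ⬝ᵥ b) + ((x ⬝ᵥ b) / q) ^ 2 * q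
            = x ⬝ᵥ M *ᵥ x - (x ⬝ᵥ b) ^ 2 / q := by field_simp; ring
        rwa [e] at hy
      have := (div_le_iff₀ hqpos).mp (by linarith : (x ⬝ᵥ b) ^ 2 / q ≤ x ⬝ᵥ M *ᵥ x)
      linarith
  apply IsGreatest.isLUB
  constructor
  · -- membership
    rcases eq_or_ne q 0 with hq | hq
    · have hb := hq0b hq
      refine ⟨c, ?_, ?_⟩
      · show 0 ≤ N11 + 2 * (N21 ⬝ᵥ c) + c ⬝ᵥ N22.mulVec c
        rw [key c]
        simpa using hs
      · simp [hb, hq]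
    · have hqpos : 0 < q := lt_of_le_of_ne hqnn (Ne.symm hq)
      set t : ℝ := Real.sqrt (s / q) with ht
      set d : Fin k → ℝ := M⁻¹ *ᵥ b with hd
      have hMd : M *ᵥ d = b := by rw [hd, mulVec_mulVec, hMinv, one_mulVec]
      have h3 : d ⬝ᵥ M *ᵥ d = q := by rw [hMd, hd, dotProduct_comm, hqdef]
      refine ⟨c + t • d, ?_, ?_⟩
      · show 0 ≤ N11 + 2 * (N21 ⬝ᵥ (c + t • d)) + (c + t • d) ⬝ᵥ N22.mulVec (c + t • d)
        rw [key]
        have hsub : c + t • d - c = t • d := by abel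
        rw [hsub, mulVec_smul, dotProduct_smul, smul_dotProduct, smul_eq_mul, smul_eq_mul,
          h3]
        have ht2 : t * (t * q) = s := by
          rw [ht, ← mul_assoc, Real.mul_self_sqrt (div_nonneg hs hqnn),
            div_mul_cancel₀ _ hq]
        linarith [ht2]
      · show (c + t • d) ⬝ᵥ b = c ⬝ᵥ b + Real.sqrt (s * q)
        rw [add_dotProduct, smul_dotProduct, smul_eq_mul]
        have hdb : d ⬝ᵥ b = q := by rw [hd, dotProduct_comm, hqdef]
        rw [hdb, ht]
        congr 1
        have e1 : Real.sqrt (s / q) * q = Real.sqrt (s / q * q ^ 2) := by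
          rw [Real.sqrt_mul (div_nonneg hs hqnn), Real.sqrt_sq hqnn]
        rw [e1]
        congr 1
        field_simp
  · -- upper bound
    rintro v ⟨γ, hγ, rfl⟩
    simp only [Set.mem_setOf_eq, key γ] at hγ
    have hle : (γ - c) ⬝ᵥ M *ᵥ (γ - c) ≤ s := by linarith
    have h1 : ((γ - c) ⬝ᵥ b) ^ 2 ≤ s * q :=
      le_trans (CS (γ - c)) (mul_le_mul_of_nonneg_right hle hqnn)
    have h2 : (γ - c) ⬝ᵥ b ≤ Real.sqrt (s * q) := by
      calc (γ - c) ⬝ᵥ b ≤ |(γ - c) ⬝ᵥ b| := le_abs_self _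
        _ = Real.sqrt (((γ - c) ⬝ᵥ b) ^ 2) := (Real.sqrt_sq_eq_abs _).symm
        _ ≤ Real.sqrt (s * q) := Real.sqrt_le_sqrt h1
    have h3 : (γ - c) ⬝ᵥ b = γ ⬝ᵥ b - c ⬝ᵥ b := by rw [sub_dotProduct]
    rw [h3] at h2
    linarith
end
end

section
/- Let N be a symmetric (1+k)×(1+k) real matrix with N₂₂ negative definite and N|N₂₂ ≥ 0, and let Γ := { γ ∈ ℝ^k : [1; γ]ᵀ N [1; γ] ≥ 0 }. Then for any fixed vector b ∈ ℝ^k, the infimum of γᵀb over γ ∈ Γ equals -N₁₂N₂₂⁻¹b - sqrt((N|N₂₂) · bᵀ(-N₂₂⁻¹)b). -/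
open Matrix

noncomputable section

/-- Closed form for the infimum of γᵀb over
Γ = {γ | [1;γ]ᵀN[1;γ] ≥ 0}: inf = -N12N22⁻¹b - √((N|N22)·bᵀ(-N22⁻¹)b). -/
theorem stmt4 {k : ℕ}
    (N11 : ℝ) (N21 : Fin k → ℝ) (N22 : Matrix (Fin k) (Fin k) ℝ)
    (hN22 : (-N22).PosDef)
    (hschur : 0 ≤ N11 - N21 ⬝ᵥ N22⁻¹.mulVec N21)
    (b : Fin k → ℝ) :
    IsGLB ((fun γ => γ ⬝ᵥ b) ''
        {γ : Fin k → ℝ | 0 ≤ N11 + 2 * (N21 ⬝ᵥ γ) + γ ⬝ᵥ N22.mulVec γ})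
      (-(N21 ⬝ᵥ N22⁻¹.mulVec b) -
        Real.sqrt ((N11 - N21 ⬝ᵥ N22⁻¹.mulVec N21) * (b ⬝ᵥ (-N22⁻¹).mulVec b))) := by
  set M : Matrix (Fin k) (Fin k) ℝ := -N22 with hMdef
  have hM : M.PosDef := hN22
  have hN22eq : N22 = -M := by rw [hMdef, neg_neg]
  have hMsym : Mᵀ = M := hM.1
  have hdet : IsUnit M.det := hM.det_pos.ne'.isUnit
  have hMM : M * M⁻¹ = 1 := Matrix.mul_nonsing_inv M hdet
  have hinv : N22⁻¹ = -M⁻¹ := by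
    apply Matrix.inv_eq_right_inv
    rw [hN22eq, Matrix.neg_mul, Matrix.mul_neg, neg_neg, hMM]
  have hMinv : M⁻¹.PosDef := hM.inv
  have hMinvsym : M⁻¹ᵀ = M⁻¹ := hMinv.1
  -- symmetry of the pairings
  have hsymm : ∀ (A : Matrix (Fin k) (Fin k) ℝ), Aᵀ = A →
      ∀ x y : Fin k → ℝ, x ⬝ᵥ A.mulVec y = y ⬝ᵥ A.mulVec x := by
    intro A hA x y
    rw [Matrix.dotProduct_mulVec, ← Matrix.mulVec_transpose, hA, dotProduct_comm]
  set c : Fin k → ℝ := M⁻¹.mulVec N21 with hcdef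
  have hc : M.mulVec c = N21 := by
    rw [hcdef, Matrix.mulVec_mulVec, hMM, Matrix.one_mulVec]
  set s : ℝ := N11 - N21 ⬝ᵥ N22⁻¹.mulVec N21 with hsdef
  set q : ℝ := b ⬝ᵥ M⁻¹.mulVec b with hqdef
  have hs : 0 ≤ s := hschur
  have hq : 0 ≤ q := by simpa using hMinv.posSemidef.dotProduct_mulVec_nonneg b
  have hqb : b ⬝ᵥ (-N22⁻¹).mulVec b = q := by rw [hinv, neg_neg]
  have hcb : -(N21 ⬝ᵥ N22⁻¹.mulVec b) = c ⬝ᵥ b := by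
    rw [hinv, Matrix.neg_mulVec, dotProduct_neg, neg_neg, hsymm _ hMinvsym N21 b,
      dotProduct_comm]
  rw [hcb, hqb]
  -- auxiliary dot product computations
  have hMb : M.mulVec (M⁻¹.mulVec b) = b := by
    rw [Matrix.mulVec_mulVec, hMM, Matrix.one_mulVec]
  have hqq : M⁻¹.mulVec b ⬝ᵥ M.mulVec (M⁻¹.mulVec b) = q := by
    rw [hMb, hqdef, dotProduct_comm]
  -- key identity: the constraint equals s - (γ-c)ᵀM(γ-c)
  have key : ∀ γ : Fin k → ℝ, N11 + 2 * (N21 ⬝ᵥ γ) + γ ⬝ᵥ N22.mulVec γ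
      = s - (γ - c) ⬝ᵥ M.mulVec (γ - c) := by
    intro γ
    have e1 : c ⬝ᵥ M.mulVec γ = N21 ⬝ᵥ γ := by
      rw [hsymm M hMsym, hc, dotProduct_comm]
    have e2 : γ ⬝ᵥ M.mulVec c = N21 ⬝ᵥ γ := by rw [hc, dotProduct_comm]
    have e3 : c ⬝ᵥ M.mulVec c = N21 ⬝ᵥ c := by rw [hc, dotProduct_comm]
    have e4 : s = N11 + N21 ⬝ᵥ c := by
      rw [hsdef, hinv, Matrix.neg_mulVec, dotProduct_neg, ← hcdef]; ring
    have e5 : γ ⬝ᵥ N22.mulVec γ = -(γ ⬝ᵥ M.mulVec γ) := by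
      rw [hN22eq, Matrix.neg_mulVec, dotProduct_neg]
    rw [e5, e4]
    simp only [Matrix.mulVec_sub, dotProduct_sub, sub_dotProduct, e1, e2, e3]
    ring
  -- lower bound
  have lb : ∀ γ ∈ {γ : Fin k → ℝ | 0 ≤ N11 + 2 * (N21 ⬝ᵥ γ) + γ ⬝ᵥ N22.mulVec γ},
      c ⬝ᵥ b - Real.sqrt (s * q) ≤ γ ⬝ᵥ b := by
    intro γ hγ
    have hγ' : (γ - c) ⬝ᵥ M.mulVec (γ - c) ≤ s := by
      have := hγ; rw [Set.mem_setOf_eq, key γ] at this; linarith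
    set δ : Fin k → ℝ := γ - c with hδdef
    have hδM : 0 ≤ δ ⬝ᵥ M.mulVec δ := by simpa using hM.posSemidef.dotProduct_mulVec_nonneg δ
    -- Cauchy-Schwarz via discriminant
    have hcs : (δ ⬝ᵥ b) ^ 2 ≤ (δ ⬝ᵥ M.mulVec δ) * q := by
      have hquad : ∀ t : ℝ, 0 ≤ q * (t * t) + (2 * (δ ⬝ᵥ b)) * t + δ ⬝ᵥ M.mulVec δ := by
        intro t
        have h0 : 0 ≤ (δ + t • M⁻¹.mulVec b) ⬝ᵥ M.mulVec (δ + t • M⁻¹.mulVec b) := by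
          simpa using hM.posSemidef.dotProduct_mulVec_nonneg (δ + t • M⁻¹.mulVec b)
        have expand : (δ + t • M⁻¹.mulVec b) ⬝ᵥ M.mulVec (δ + t • M⁻¹.mulVec b)
            = q * (t * t) + (2 * (δ ⬝ᵥ b)) * t + δ ⬝ᵥ M.mulVec δ := by
          have f1 : δ ⬝ᵥ M.mulVec (M⁻¹.mulVec b) = δ ⬝ᵥ b := by rw [hMb]
          have f2 : M⁻¹.mulVec b ⬝ᵥ M.mulVec δ = δ ⬝ᵥ b := by
            rw [hsymm M hMsym, hMb]
          simp only [Matrix.mulVec_add, Matrix.mulVec_smul, dotProduct_add,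
            add_dotProduct, dotProduct_smul, smul_dotProduct, smul_eq_mul,
            f1, f2, hqq]
          ring
        rw [expand] at h0; exact h0
      have hd := discrim_le_zero hquad
      rw [discrim] at hd
      nlinarith [hd]
    have hcs2 : (δ ⬝ᵥ b) ^ 2 ≤ s * q := by nlinarith [mul_le_mul_of_nonneg_right hγ' hq]
    have habs : |δ ⬝ᵥ b| ≤ Real.sqrt (s * q) := by
      rw [← Real.sqrt_sq_eq_abs]
      exact Real.sqrt_le_sqrt hcs2
    have h1 : -(Real.sqrt (s * q)) ≤ δ ⬝ᵥ b := by
      have := neg_abs_le (δ ⬝ᵥ b); linarith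
    have h2 : δ ⬝ᵥ b = γ ⬝ᵥ b - c ⬝ᵥ b := by rw [hδdef, sub_dotProduct]
    linarith
  -- the infimum is attained
  have mem : c ⬝ᵥ b - Real.sqrt (s * q) ∈ (fun γ => γ ⬝ᵥ b) ''
      {γ : Fin k → ℝ | 0 ≤ N11 + 2 * (N21 ⬝ᵥ γ) + γ ⬝ᵥ N22.mulVec γ} := by
    by_cases hb : b = 0
    · refine ⟨c, ?_, ?_⟩
      · rw [Set.mem_setOf_eq, key c]; simp [hs]
      · have hq0' : q = 0 := by rw [hqdef, hb]; simp
        simp [hb, hq0']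
    · have hq0 : 0 < q := by
        simpa using hMinv.dotProduct_mulVec_pos hb
      set r : ℝ := Real.sqrt (s / q) with hrdef
      have hr : r * r = s / q := Real.mul_self_sqrt (div_nonneg hs hq)
      refine ⟨c - r • M⁻¹.mulVec b, ?_, ?_⟩
      · rw [Set.mem_setOf_eq, key _]
        have : (c - r • M⁻¹.mulVec b - c) ⬝ᵥ M.mulVec (c - r • M⁻¹.mulVec b - c) = s := by
          have h3 : c - r • M⁻¹.mulVec b - c = (-r) • M⁻¹.mulVec b := by
            rw [sub_sub_cancel_left, neg_smul]
          rw [h3]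
          simp only [Matrix.mulVec_smul, dotProduct_smul, smul_dotProduct,
            smul_eq_mul, hqq]
          rw [show (-r) * ((-r) * q) = (r * r) * q by ring, hr,
            div_mul_cancel₀ _ (ne_of_gt hq0)]
        rw [this]; simp
      · have hrq : r * q = Real.sqrt (s * q) := by
          rw [hrdef, show s * q = s / q * q ^ 2 by field_simp,
            Real.sqrt_mul (div_nonneg hs hq), Real.sqrt_sq hq]
        simp only [sub_dotProduct, smul_dotProduct, smul_eq_mul]
        rw [show M⁻¹.mulVec b ⬝ᵥ b = q by rw [hqdef, dotProduct_comm], hrq]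
    -- done
  refine IsLeast.isGLB ⟨mem, ?_⟩
  rintro x ⟨γ, hγ, rfl⟩
  exact lb γ hγ
end
end

section
/- Let N be a symmetric (1+k)×(1+k) real matrix with N₂₂ negative definite and N|N₂₂ ≥ 0, and Γ := { γ ∈ ℝ^k : [1; γ]ᵀ N [1; γ] ≥ 0 }. Define U(b) := sup_{γ∈Γ} γᵀb - inf_{γ∈Γ} γᵀb for b ∈ ℝ^k. Then U(b) = 2·sqrt((N|N₂₂) · bᵀ(-N₂₂⁻¹)b). -/
open Matrix

noncomputable section

private lemma cs_aux {k : ℕ} (M : Matrix (Fin k) (Fin k) ℝ) (hM : M.PosDef)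
    (x b : Fin k → ℝ) :
    (x ⬝ᵥ b) ^ 2 ≤ (x ⬝ᵥ M *ᵥ x) * (b ⬝ᵥ M⁻¹ *ᵥ b) := by
  have hT : Mᵀ = M := by simpa [Matrix.IsSymm] using hM.1
  have hsymm : ∀ u v : Fin k → ℝ, u ⬝ᵥ M *ᵥ v = v ⬝ᵥ M *ᵥ u := fun u v => by
    rw [dotProduct_mulVec, ← mulVec_transpose, hT, dotProduct_comm]
  have hdet : IsUnit M.det := isUnit_iff_ne_zero.mpr hM.det_pos.ne'
  set w := M⁻¹ *ᵥ b with hw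
  have hMw : M *ᵥ w = b := by
    rw [hw, mulVec_mulVec, Matrix.mul_nonsing_inv _ hdet, one_mulVec]
  have hwb : w ⬝ᵥ b = b ⬝ᵥ M⁻¹ *ᵥ b := by rw [dotProduct_comm, hw]
  have key : ∀ t : ℝ, 0 ≤ (b ⬝ᵥ M⁻¹ *ᵥ b) * (t * t) + (-(2 * (x ⬝ᵥ b))) * t
      + (x ⬝ᵥ M *ᵥ x) := by
    intro t
    have h0 : 0 ≤ (x - t • w) ⬝ᵥ M *ᵥ (x - t • w) := by
      simpa using hM.posSemidef.dotProduct_mulVec_nonneg (x - t • w)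
    have hexp : (x - t • w) ⬝ᵥ M *ᵥ (x - t • w)
        = (x ⬝ᵥ M *ᵥ x) - 2 * t * (x ⬝ᵥ b) + t * t * (b ⬝ᵥ M⁻¹ *ᵥ b) := by
      have h1 : w ⬝ᵥ M *ᵥ x = x ⬝ᵥ b := by
        rw [hsymm w x, hMw]
      have h2 : w ⬝ᵥ M *ᵥ w = b ⬝ᵥ M⁻¹ *ᵥ b := by rw [hMw, hwb]
      have h3 : x ⬝ᵥ M *ᵥ w = x ⬝ᵥ b := by rw [hMw]
      simp only [sub_dotProduct, dotProduct_sub, mulVec_sub, mulVec_smul,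
        smul_dotProduct, dotProduct_smul, smul_eq_mul, h1, h2, h3]
      ring
    rw [hexp] at h0
    nlinarith [h0]
  have hd := discrim_le_zero key
  rw [discrim] at hd
  nlinarith [hd]

/-- The uncertainty U(b) = sup_{γ∈Γ} γᵀb - inf_{γ∈Γ} γᵀb equals
2·√((N|N22)·bᵀ(-N22⁻¹)b). -/
theorem stmt5 {k : ℕ}
    (N11 : ℝ) (N21 : Fin k → ℝ) (N22 : Matrix (Fin k) (Fin k) ℝ)
    (hN22 : (-N22).PosDef)
    (hschur : 0 ≤ N11 - N21 ⬝ᵥ N22⁻¹.mulVec N21)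
    (b : Fin k → ℝ) :
    let Γ : Set (Fin k → ℝ) :=
      {γ | 0 ≤ N11 + 2 * (N21 ⬝ᵥ γ) + γ ⬝ᵥ N22.mulVec γ}
    sSup ((fun γ => γ ⬝ᵥ b) '' Γ) - sInf ((fun γ => γ ⬝ᵥ b) '' Γ) =
      2 * Real.sqrt ((N11 - N21 ⬝ᵥ N22⁻¹.mulVec N21) * (b ⬝ᵥ (-N22⁻¹).mulVec b)) := by
  intro Γ
  set M : Matrix (Fin k) (Fin k) ℝ := -N22 with hMdef
  have hM : M.PosDef := hN22
  have hN22M : N22 = -M := by rw [hMdef, neg_neg]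
  have hT : Mᵀ = M := by simpa [Matrix.IsSymm] using hM.1
  have hsymm : ∀ u v : Fin k → ℝ, u ⬝ᵥ M *ᵥ v = v ⬝ᵥ M *ᵥ u := fun u v => by
    rw [dotProduct_mulVec, ← mulVec_transpose, hT, dotProduct_comm]
  have hdet : IsUnit M.det := isUnit_iff_ne_zero.mpr hM.det_pos.ne'
  have hinv : N22⁻¹ = -M⁻¹ := by
    apply inv_eq_right_inv
    rw [hN22M, Matrix.neg_mul, Matrix.mul_neg, neg_neg,
      Matrix.mul_nonsing_inv _ hdet]
  have hMinv : M⁻¹.PosDef := hM.inv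
  set s : ℝ := N11 - N21 ⬝ᵥ N22⁻¹.mulVec N21 with hs
  set q : ℝ := b ⬝ᵥ M⁻¹ *ᵥ b with hq
  set c : Fin k → ℝ := M⁻¹ *ᵥ N21 with hc
  have hMc : M *ᵥ c = N21 := by
    rw [hc, mulVec_mulVec, Matrix.mul_nonsing_inv _ hdet, one_mulVec]
  have hsval : s = N11 + N21 ⬝ᵥ c := by
    rw [hs, hinv, hc]; simp [Matrix.neg_mulVec]
  have hq0 : 0 ≤ q := by simpa using hMinv.posSemidef.dotProduct_mulVec_nonneg b
  have hs0 : 0 ≤ s := hschur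
  have hrhs : b ⬝ᵥ (-N22⁻¹).mulVec b = q := by rw [hinv, neg_neg, hq]
  -- membership characterization
  have hmem : ∀ γ : Fin k → ℝ, γ ∈ Γ ↔ (γ - c) ⬝ᵥ M *ᵥ (γ - c) ≤ s := by
    intro γ
    have hexp : (γ - c) ⬝ᵥ M *ᵥ (γ - c)
        = γ ⬝ᵥ M *ᵥ γ - 2 * (N21 ⬝ᵥ γ) + N21 ⬝ᵥ c := by
      have h1 : c ⬝ᵥ M *ᵥ γ = N21 ⬝ᵥ γ := by rw [hsymm c γ, hMc, dotProduct_comm]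
      have h2 : γ ⬝ᵥ M *ᵥ c = N21 ⬝ᵥ γ := by rw [hMc, dotProduct_comm]
      have h3 : c ⬝ᵥ M *ᵥ c = N21 ⬝ᵥ c := by rw [hMc, dotProduct_comm]
      simp only [sub_dotProduct, dotProduct_sub, mulVec_sub, h1, h2, h3]
      ring
    have hN22γ : γ ⬝ᵥ N22 *ᵥ γ = -(γ ⬝ᵥ M *ᵥ γ) := by
      rw [hN22M, Matrix.neg_mulVec, dotProduct_neg]
    constructor
    · intro hγ
      have : 0 ≤ N11 + 2 * (N21 ⬝ᵥ γ) + γ ⬝ᵥ N22 *ᵥ γ := hγ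
      rw [hN22γ] at this
      rw [hexp, hsval]; linarith
    · intro h
      rw [hexp, hsval] at h
      show 0 ≤ N11 + 2 * (N21 ⬝ᵥ γ) + γ ⬝ᵥ N22 *ᵥ γ
      rw [hN22γ]; linarith
  set r : ℝ := Real.sqrt (s * q) with hr
  have hr0 : 0 ≤ r := Real.sqrt_nonneg _
  -- upper and lower bounds on γ ⬝ᵥ b for γ ∈ Γ
  have hbound : ∀ γ ∈ Γ, |(γ - c) ⬝ᵥ b| ≤ r := by
    intro γ hγ
    have hd := (hmem γ).mp hγ
    have hcs := cs_aux M hM (γ - c) b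
    have hdd : 0 ≤ (γ - c) ⬝ᵥ M *ᵥ (γ - c) := by simpa using hM.posSemidef.dotProduct_mulVec_nonneg (γ - c)
    have h2 : ((γ - c) ⬝ᵥ b) ^ 2 ≤ s * q := by
      calc ((γ - c) ⬝ᵥ b) ^ 2 ≤ ((γ - c) ⬝ᵥ M *ᵥ (γ - c)) * q := hcs
        _ ≤ s * q := by nlinarith
    calc |(γ - c) ⬝ᵥ b| = Real.sqrt (((γ - c) ⬝ᵥ b) ^ 2) := (Real.sqrt_sq_eq_abs _).symm
      _ ≤ r := Real.sqrt_le_sqrt h2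
  have hub : ∀ γ ∈ Γ, γ ⬝ᵥ b ≤ c ⬝ᵥ b + r := by
    intro γ hγ
    have h := (abs_le.mp (hbound γ hγ)).2
    have : (γ - c) ⬝ᵥ b = γ ⬝ᵥ b - c ⬝ᵥ b := by rw [sub_dotProduct]
    linarith [this ▸ h]
  have hlb : ∀ γ ∈ Γ, c ⬝ᵥ b - r ≤ γ ⬝ᵥ b := by
    intro γ hγ
    have h := (abs_le.mp (hbound γ hγ)).1
    have : (γ - c) ⬝ᵥ b = γ ⬝ᵥ b - c ⬝ᵥ b := by rw [sub_dotProduct]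
    linarith [this ▸ h]
  -- attainment
  have hcΓ : c ∈ Γ := by
    rw [hmem]; simpa using hs0
  by_cases hqz : q = 0
  · -- then b = 0
    have hb0 : b = 0 := by
      by_contra hb
      have := hMinv.dotProduct_mulVec_pos hb
      simp only [star_trivial] at this
      rw [← hq, hqz] at this; exact lt_irrefl _ this
    have himg : (fun γ => γ ⬝ᵥ b) '' Γ = {0} := by
      apply Set.eq_singleton_iff_nonempty_unique_mem.mpr
      constructor
      · exact ⟨c ⬝ᵥ b, ⟨c, hcΓ, rfl⟩⟩
      · rintro x ⟨γ, _, rfl⟩; simp [hb0]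
    rw [himg, csSup_singleton, csInf_singleton, hrhs, hqz, mul_zero, Real.sqrt_zero]
    ring
  · have hqpos : 0 < q := lt_of_le_of_ne hq0 (Ne.symm hqz)
    set w : Fin k → ℝ := M⁻¹ *ᵥ b with hw
    have hMw : M *ᵥ w = b := by
      rw [hw, mulVec_mulVec, Matrix.mul_nonsing_inv _ hdet, one_mulVec]
    have hwb : w ⬝ᵥ b = q := by rw [hq, dotProduct_comm, hw]
    have hwMw : w ⬝ᵥ M *ᵥ w = q := by rw [hMw, hwb]
    set t : ℝ := Real.sqrt (s / q) with ht
    have ht2 : t * t = s / q := Real.mul_self_sqrt (div_nonneg hs0 hqpos.le)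
    have htq : t * q = r := by
      have h1 : 0 ≤ t * q := mul_nonneg (Real.sqrt_nonneg _) hqpos.le
      have h2 : (t * q) * (t * q) = s * q := by
        have : (t * q) * (t * q) = (t * t) * (q * q) := by ring
        rw [this, ht2]; field_simp
      rw [hr, ← h2, Real.sqrt_mul_self h1]
    have hquad : ∀ ε : ℝ, ε = 1 ∨ ε = -1 → (c + (ε * t) • w) ∈ Γ := by
      intro ε hε
      rw [hmem]
      have h4 : (c + (ε * t) • w) - c = (ε * t) • w := add_sub_cancel_left c _
      rw [h4]
      have h5 : ((ε * t) • w) ⬝ᵥ M *ᵥ ((ε * t) • w) = (ε * ε) * (t * t) * q := by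
        simp only [mulVec_smul, smul_dotProduct, dotProduct_smul, smul_eq_mul, hwMw]
        ring
      rw [h5, ht2]
      have hε2 : ε * ε = 1 := by rcases hε with h | h <;> rw [h] <;> ring
      rw [hε2]
      rw [one_mul, div_mul_cancel₀ _ hqpos.ne']
    have hval : ∀ ε : ℝ, (c + (ε * t) • w) ⬝ᵥ b = c ⬝ᵥ b + ε * r := by
      intro ε
      rw [add_dotProduct, smul_dotProduct, smul_eq_mul, hwb, ← htq]
      ring
    have hne : ((fun γ => γ ⬝ᵥ b) '' Γ).Nonempty := ⟨c ⬝ᵥ b, ⟨c, hcΓ, rfl⟩⟩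
    have hbdd : BddAbove ((fun γ => γ ⬝ᵥ b) '' Γ) := by
      refine ⟨c ⬝ᵥ b + r, ?_⟩
      rintro x ⟨γ, hγ, rfl⟩; exact hub γ hγ
    have hbddb : BddBelow ((fun γ => γ ⬝ᵥ b) '' Γ) := by
      refine ⟨c ⬝ᵥ b - r, ?_⟩
      rintro x ⟨γ, hγ, rfl⟩; exact hlb γ hγ
    have hsup : sSup ((fun γ => γ ⬝ᵥ b) '' Γ) = c ⬝ᵥ b + r := by
      apply le_antisymm
      · apply csSup_le hne
        rintro x ⟨γ, hγ, rfl⟩; exact hub γ hγ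
      · have hmem1 : c ⬝ᵥ b + r ∈ (fun γ => γ ⬝ᵥ b) '' Γ := by
          refine ⟨c + (1 * t) • w, hquad 1 (Or.inl rfl), ?_⟩
          show (c + (1 * t) • w) ⬝ᵥ b = c ⬝ᵥ b + r
          rw [hval 1]; ring
        exact le_csSup hbdd hmem1
    have hinf : sInf ((fun γ => γ ⬝ᵥ b) '' Γ) = c ⬝ᵥ b - r := by
      apply le_antisymm
      · have hmem1 : c ⬝ᵥ b - r ∈ (fun γ => γ ⬝ᵥ b) '' Γ := by
          refine ⟨c + ((-1) * t) • w, hquad (-1) (Or.inr rfl), ?_⟩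
          show (c + ((-1) * t) • w) ⬝ᵥ b = c ⬝ᵥ b - r
          rw [hval (-1)]; ring
        exact csInf_le hbddb hmem1
      · apply le_csInf hne
        rintro x ⟨γ, hγ, rfl⟩; exact hlb γ hγ
    rw [hsup, hinf, hrhs, hr]
    ring
end
end

section
/- Let N be symmetric (1+k)×(1+k) with N₂₂ negative definite and N|N₂₂ ≥ 0, Γ := { γ : [1;γ]ᵀN[1;γ] ≥ 0 }. For λ ≥ 0 define N_λ := N + [[4λ(1+λ)(N|N₂₂), 0],[0, 0]] and Γ_λ := { γ : [1;γ]ᵀN_λ[1;γ] ≥ 0 }. Then for every b ∈ ℝ^k, sup_{γ∈Γ} γᵀb + λ·(sup_{γ∈Γ} γᵀb - inf_{γ∈Γ} γᵀb) = sup_{γ∈Γ_λ} γᵀb. -/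
open Matrix

noncomputable section

lemma dot_symm {k : ℕ} {M : Matrix (Fin k) (Fin k) ℝ} (hM : M.IsHermitian)
    (x y : Fin k → ℝ) : x ⬝ᵥ M.mulVec y = y ⬝ᵥ M.mulVec x := by
  have ht : Mᵀ = M := hM
  rw [dotProduct_mulVec, ← mulVec_transpose, ht, dotProduct_comm]

lemma cs {k : ℕ} {M : Matrix (Fin k) (Fin k) ℝ} (hM : M.PosDef)
    (x y : Fin k → ℝ) :
    (x ⬝ᵥ M.mulVec y)^2 ≤ (x ⬝ᵥ M.mulVec x) * (y ⬝ᵥ M.mulVec y) := by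
  have key : ∀ t : ℝ, 0 ≤ (y ⬝ᵥ M.mulVec y) * (t * t) + (2 * (x ⬝ᵥ M.mulVec y)) * t + x ⬝ᵥ M.mulVec x := by
    intro t
    have h0 := hM.posSemidef.dotProduct_mulVec_nonneg (x + t • y)
    have hxy := dot_symm hM.1 x y
    simp only [star_trivial, mulVec_add, mulVec_smul, dotProduct_add, add_dotProduct,
      dotProduct_smul, smul_dotProduct, smul_eq_mul] at h0
    rw [hxy] at h0 ⊢
    set a := y ⬝ᵥ M.mulVec y
    set bb := y ⬝ᵥ M.mulVec x
    set c := x ⬝ᵥ M.mulVec x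
    nlinarith [h0]
  have h2 := discrim_le_zero key
  rw [discrim] at h2
  nlinarith [h2]

lemma image_ball {k : ℕ} {M : Matrix (Fin k) (Fin k) ℝ} (hM : M.PosDef)
    {s : ℝ} (hs : 0 ≤ s) (c b : Fin k → ℝ) :
    (fun γ => γ ⬝ᵥ b) '' {γ | (γ - c) ⬝ᵥ M.mulVec (γ - c) ≤ s} =
      Set.Icc (c ⬝ᵥ b - Real.sqrt (s * (b ⬝ᵥ M⁻¹.mulVec b)))
              (c ⬝ᵥ b + Real.sqrt (s * (b ⬝ᵥ M⁻¹.mulVec b))) := by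
  have hdet : IsUnit M.det := isUnit_iff_ne_zero.mpr hM.det_pos.ne'
  have hMinv : M * M⁻¹ = 1 := mul_nonsing_inv M hdet
  set y := M⁻¹.mulVec b with hy
  have hMy : M.mulVec y = b := by rw [hy, mulVec_mulVec, hMinv, one_mulVec]
  set q := b ⬝ᵥ M⁻¹.mulVec b with hq
  have hqy : y ⬝ᵥ M.mulVec y = q := by rw [hMy, dotProduct_comm, hq, hy]
  have hq0 : 0 ≤ q := by rw [← hqy]; exact hM.posSemidef.dotProduct_mulVec_nonneg y
  have hsq0 : 0 ≤ s * q := mul_nonneg hs hq0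
  have hr0 : 0 ≤ Real.sqrt (s * q) := Real.sqrt_nonneg _
  ext v
  constructor
  · rintro ⟨γ, hγ, rfl⟩
    have hx : (γ - c) ⬝ᵥ b = γ ⬝ᵥ b - c ⬝ᵥ b := by rw [sub_dotProduct]
    have hcs := cs hM (γ - c) y
    rw [hqy, hMy] at hcs
    have hcs2 : ((γ - c) ⬝ᵥ b)^2 ≤ s * q :=
      le_trans hcs (mul_le_mul_of_nonneg_right hγ hq0)
    have habs : |(γ - c) ⬝ᵥ b| ≤ Real.sqrt (s * q) := by
      rw [← Real.sqrt_sq_eq_abs]; exact Real.sqrt_le_sqrt hcs2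
    obtain ⟨h1, h2⟩ := abs_le.1 habs
    rw [hx] at h1 h2
    exact ⟨by linarith, by linarith⟩
  · intro hv
    obtain ⟨h1, h2⟩ := hv
    by_cases hqz : q = 0
    · have hy0 : y = 0 := by
        by_contra hne
        exact absurd hqy (by rw [hqz]; exact (hM.dotProduct_mulVec_pos hne).ne')
      have hb0 : b = 0 := by rw [← hMy, hy0, mulVec_zero]
      have hv0 : v = c ⬝ᵥ b := by
        rw [hqz, mul_zero, Real.sqrt_zero] at h1 h2; linarith
      exact ⟨c, by simp [hs], by rw [hv0]⟩
    · have hqpos : 0 < q := lt_of_le_of_ne hq0 (Ne.symm hqz)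
      set α := (v - c ⬝ᵥ b) / q with hα
      refine ⟨c + α • y, ?_, ?_⟩
      · show (c + α • y - c) ⬝ᵥ M.mulVec (c + α • y - c) ≤ s
        have hsimp : c + α • y - c = α • y := by abel
        rw [hsimp, mulVec_smul, smul_dotProduct, dotProduct_smul, smul_eq_mul,
          smul_eq_mul, hqy]
        have hvr2 : (v - c ⬝ᵥ b)^2 ≤ s * q := by
          have := sq_le_sq' (by linarith : -(Real.sqrt (s*q)) ≤ v - c ⬝ᵥ b)
            (by linarith : v - c ⬝ᵥ b ≤ Real.sqrt (s*q))
          rwa [Real.sq_sqrt hsq0] at this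
        have heq : α * (α * q) = (v - c ⬝ᵥ b)^2 / q := by
          rw [hα]; field_simp
        rw [heq, div_le_iff₀ hqpos]
        linarith [hvr2]
      · show (c + α • y) ⬝ᵥ b = v
        have hyb : y ⬝ᵥ b = q := by rw [dotProduct_comm, hq, hy]
        rw [add_dotProduct, smul_dotProduct, smul_eq_mul, hyb, hα]
        field_simp
        ring

/-- For λ ≥ 0 and N_λ obtained from N by adding 4λ(1+λ)(N|N22) to
the (1,1) entry, with Γ_λ = Z(N_λ), we have
sup_{γ∈Γ} γᵀb + λ(sup_{γ∈Γ} γᵀb - inf_{γ∈Γ} γᵀb) = sup_{γ∈Γ_λ} γᵀb. -/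
theorem stmt6 {k : ℕ}
    (N11 : ℝ) (N21 : Fin k → ℝ) (N22 : Matrix (Fin k) (Fin k) ℝ)
    (hN22 : (-N22).PosDef)
    (hschur : 0 ≤ N11 - N21 ⬝ᵥ N22⁻¹.mulVec N21)
    (lam : ℝ) (hlam : 0 ≤ lam)
    (b : Fin k → ℝ) :
    let Γ : Set (Fin k → ℝ) :=
      {γ | 0 ≤ N11 + 2 * (N21 ⬝ᵥ γ) + γ ⬝ᵥ N22.mulVec γ}
    let Γl : Set (Fin k → ℝ) :=
      {γ | 0 ≤ (N11 + 4 * lam * (1 + lam) * (N11 - N21 ⬝ᵥ N22⁻¹.mulVec N21)) +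
            2 * (N21 ⬝ᵥ γ) + γ ⬝ᵥ N22.mulVec γ}
    sSup ((fun γ => γ ⬝ᵥ b) '' Γ) +
        lam * (sSup ((fun γ => γ ⬝ᵥ b) '' Γ) - sInf ((fun γ => γ ⬝ᵥ b) '' Γ)) =
      sSup ((fun γ => γ ⬝ᵥ b) '' Γl) := by
  intro Γ Γl
  set M : Matrix (Fin k) (Fin k) ℝ := -N22 with hMdef
  have hM : M.PosDef := hN22
  have hdet : IsUnit M.det := isUnit_iff_ne_zero.mpr hM.det_pos.ne'
  have hinv : N22⁻¹ = -(M⁻¹) := by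
    have h : N22 * -(M⁻¹) = 1 := by
      have h0 : N22 = -M := by rw [hMdef, neg_neg]
      rw [h0, neg_mul_neg, mul_nonsing_inv M hdet]
    exact inv_eq_right_inv h
  set c : Fin k → ℝ := M⁻¹.mulVec N21 with hc
  have hMc : M.mulVec c = N21 := by
    rw [hc, mulVec_mulVec, mul_nonsing_inv M hdet, one_mulVec]
  have hd : N21 ⬝ᵥ N22⁻¹.mulVec N21 = -(N21 ⬝ᵥ c) := by
    rw [hinv, neg_mulVec, dotProduct_neg, hc]
  set s : ℝ := N11 + N21 ⬝ᵥ c with hs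
  have hs0 : 0 ≤ s := by rw [hs]; rw [hd] at hschur; linarith
  have expand : ∀ γ : Fin k → ℝ, (γ - c) ⬝ᵥ M.mulVec (γ - c) =
      -(γ ⬝ᵥ N22.mulVec γ) - 2 * (N21 ⬝ᵥ γ) + N21 ⬝ᵥ c := by
    intro γ
    have h2 : c ⬝ᵥ M.mulVec γ = γ ⬝ᵥ N21 := by rw [dot_symm hM.1, hMc]
    have h3 : γ ⬝ᵥ M.mulVec γ = -(γ ⬝ᵥ N22.mulVec γ) := by
      rw [hMdef, neg_mulVec, dotProduct_neg]
    have h4 : c ⬝ᵥ M.mulVec c = N21 ⬝ᵥ c := by rw [hMc, dotProduct_comm]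
    simp only [mulVec_sub, dotProduct_sub, sub_dotProduct, h2, h3, h4, hMc]
    rw [dotProduct_comm γ N21, dotProduct_comm c N21]
    ring
  have hΓ : Γ = {γ | (γ - c) ⬝ᵥ M.mulVec (γ - c) ≤ s} := by
    ext γ
    simp only [Γ, Set.mem_setOf_eq, expand γ, hs]
    constructor <;> intro h <;> linarith
  set sl : ℝ := s * (1 + 2 * lam)^2 with hsl
  have hsl0 : 0 ≤ sl := by positivity
  have hΓl : Γl = {γ | (γ - c) ⬝ᵥ M.mulVec (γ - c) ≤ sl} := by
    ext γ
    simp only [Γl, Set.mem_setOf_eq, expand γ, hsl, hd, hs]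
    constructor <;> intro h <;> nlinarith [h]
  set q : ℝ := b ⬝ᵥ M⁻¹.mulVec b with hq
  have hq0 : 0 ≤ q := by
    rw [hq]
    have := (hM.inv).posSemidef.dotProduct_mulVec_nonneg b
    simpa using this
  have hr0 : (0:ℝ) ≤ Real.sqrt (s * q) := Real.sqrt_nonneg _
  rw [hΓ, hΓl, image_ball hM hs0 c b, image_ball hM hsl0 c b]
  have hrl0 : (0:ℝ) ≤ Real.sqrt (sl * (b ⬝ᵥ M⁻¹.mulVec b)) := Real.sqrt_nonneg _
  rw [csSup_Icc (by linarith), csInf_Icc (by linarith), csSup_Icc (by linarith)]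
  have hkey : Real.sqrt (sl * q) = (1 + 2 * lam) * Real.sqrt (s * q) := by
    have h1 : sl * q = (1 + 2 * lam)^2 * (s * q) := by rw [hsl]; ring
    rw [h1, Real.sqrt_mul (sq_nonneg _), Real.sqrt_sq (by linarith)]
  rw [hkey]
  ring
end
end

section
/- Let N be a symmetric (1+k)×(1+k) real matrix and Γ := { γ ∈ ℝ^k : [1;γ]ᵀN[1;γ] ≥ 0 }. If N ≤ 0 (negative semidefinite), N₂₂ is negative definite, and -N₂₂⁻¹N₂₁ ≥ 0 elementwise, then Γ ⊆ ℝ^k_{≥0}, i.e., every γ ∈ Γ has all coordinates nonnegative. -/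
open Matrix

noncomputable section

/-- If the full matrix N = [[N11, N21ᵀ],[N21, N22]] is negative
semidefinite, N22 is negative definite and -N22⁻¹N21 ≥ 0 elementwise, then
every γ with [1;γ]ᵀN[1;γ] ≥ 0 has all coordinates nonnegative. -/
theorem stmt7 {k : ℕ}
    (N11 : ℝ) (N21 : Fin k → ℝ) (N22 : Matrix (Fin k) (Fin k) ℝ)
    (hNsd : ∀ (t : ℝ) (γ : Fin k → ℝ),
      t ^ 2 * N11 + 2 * t * (N21 ⬝ᵥ γ) + γ ⬝ᵥ N22.mulVec γ ≤ 0)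
    (hN22 : (-N22).PosDef)
    (hcenter : ∀ i, 0 ≤ (-(N22⁻¹.mulVec N21)) i) :
    ∀ γ : Fin k → ℝ,
      0 ≤ N11 + 2 * (N21 ⬝ᵥ γ) + γ ⬝ᵥ N22.mulVec γ → ∀ i, 0 ≤ γ i := by
  intro γ hq i
  -- invertibility of N22
  have hdetneg : (-N22).det ≠ 0 := ne_of_gt hN22.det_pos
  have hdet : IsUnit N22.det := by
    rw [Matrix.det_neg] at hdetneg
    have : N22.det ≠ 0 := by
      intro h; apply hdetneg; rw [h, mul_zero]
    exact isUnit_iff_ne_zero.mpr this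
  set c : Fin k → ℝ := -(N22⁻¹.mulVec N21) with hc
  have hN22c : N22.mulVec c = -N21 := by
    rw [hc, Matrix.mulVec_neg, Matrix.mulVec_mulVec, Matrix.mul_nonsing_inv _ hdet,
      Matrix.one_mulVec]
  -- symmetry of N22
  have hsym : N22ᵀ = N22 := by
    ext i j
    have := congrFun (congrFun hN22.1 i) j
    simpa [Matrix.conjTranspose_apply, neg_eq_iff_eq_neg] using this
  have hswap : ∀ x y : Fin k → ℝ, x ⬝ᵥ N22.mulVec y = N22.mulVec x ⬝ᵥ y := by
    intro x y
    rw [Matrix.dotProduct_mulVec, ← Matrix.mulVec_transpose, hsym]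
  set d : Fin k → ℝ := γ - c with hd
  -- expand the quadratic form at d
  have hexp : d ⬝ᵥ N22.mulVec d
      = γ ⬝ᵥ N22.mulVec γ + 2 * (N21 ⬝ᵥ γ) - N21 ⬝ᵥ c := by
    have h1 : γ ⬝ᵥ N22.mulVec c = -(N21 ⬝ᵥ γ) := by
      rw [hN22c, dotProduct_neg, dotProduct_comm]
    have h2 : c ⬝ᵥ N22.mulVec γ = -(N21 ⬝ᵥ γ) := by
      rw [hswap, hN22c, neg_dotProduct]
    have h3 : c ⬝ᵥ N22.mulVec c = -(N21 ⬝ᵥ c) := by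
      rw [hN22c, dotProduct_neg, dotProduct_comm]
    rw [hd, sub_dotProduct, Matrix.mulVec_sub, dotProduct_sub,
      dotProduct_sub, h1, h2, h3]
    ring
  -- hNsd at t = 1, γ = c : N11 + N21 ⬝ᵥ c ≤ 0
  have hcc : N11 + N21 ⬝ᵥ c ≤ 0 := by
    have h := hNsd 1 c
    have h3 : c ⬝ᵥ N22.mulVec c = -(N21 ⬝ᵥ c) := by
      rw [hN22c, dotProduct_neg, dotProduct_comm]
    rw [h3] at h
    linarith
  -- so d ⬝ᵥ N22 d ≥ 0
  have hdq : 0 ≤ d ⬝ᵥ N22.mulVec d := by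
    rw [hexp]; linarith
  -- negative definiteness forces d = 0
  have hd0 : d = 0 := by
    by_contra h0
    have := (Matrix.posDef_iff_dotProduct_mulVec.mp hN22).2 h0
    have hre : 0 < d ⬝ᵥ (-N22).mulVec d := by simpa using this
    rw [Matrix.neg_mulVec, dotProduct_neg] at hre
    linarith
  have hγc : γ = c := by
    have := sub_eq_zero.mp (by simpa [hd] using hd0)
    exact this
  rw [hγc]
  exact hcenter i
end
end

section
/- Let N be a symmetric (1+k)×(1+k) real matrix with N₂₂ negative definite, such that -N₂₂⁻¹N₂₁ > 0 elementwise and for all i = 1,…,k: N|N₂₂ + (eᵢᵀN₂₂⁻¹N₂₁)²/(eᵢᵀN₂₂⁻¹eᵢ) ≤ 0. Then Γ := { γ ∈ ℝ^k : [1;γ]ᵀN[1;γ] ≥ 0 } satisfies Γ ⊆ ℝ^k_{≥0}. -/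
open Matrix

noncomputable section

/-- If N22 is negative definite, -N22⁻¹N21 > 0 elementwise, and
for all i: N|N22 + (eᵢᵀN22⁻¹N21)²/(eᵢᵀN22⁻¹eᵢ) ≤ 0, then
Γ = {γ | [1;γ]ᵀN[1;γ] ≥ 0} ⊆ ℝ^k_{≥0}. -/
theorem stmt8 {k : ℕ}
    (N11 : ℝ) (N21 : Fin k → ℝ) (N22 : Matrix (Fin k) (Fin k) ℝ)
    (hN22 : (-N22).PosDef)
    (hcenter : ∀ i, 0 < (-(N22⁻¹.mulVec N21)) i)
    (hcond : ∀ i : Fin k,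
      (N11 - N21 ⬝ᵥ N22⁻¹.mulVec N21) +
        (N22⁻¹.mulVec N21 i) ^ 2 / (N22⁻¹ i i) ≤ 0) :
    ∀ γ : Fin k → ℝ,
      0 ≤ N11 + 2 * (N21 ⬝ᵥ γ) + γ ⬝ᵥ N22.mulVec γ → ∀ i, 0 ≤ γ i := by
  intro γ hγ i
  set M : Matrix (Fin k) (Fin k) ℝ := -N22 with hMdef
  have hM : M.PosDef := hN22
  have hMsym : Mᵀ = M := hM.1
  have hdet : IsUnit M.det := isUnit_iff_ne_zero.mpr (ne_of_gt hM.det_pos)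
  have hMinv : M * M⁻¹ = 1 := Matrix.mul_nonsing_inv M hdet
  have hinv : N22⁻¹ = -M⁻¹ := by
    apply Matrix.inv_eq_right_inv
    calc N22 * -M⁻¹ = M * M⁻¹ := by simp [hMdef]
    _ = 1 := hMinv
  have hMinvsym : M⁻¹ᵀ = M⁻¹ := by
    exact hM.inv.1
  -- symmetric bilinear form helper
  have hsymm : ∀ v w : Fin k → ℝ, v ⬝ᵥ M.mulVec w = w ⬝ᵥ M.mulVec v := by
    intro v w
    rw [Matrix.dotProduct_mulVec, ← Matrix.mulVec_transpose, hMsym, dotProduct_comm]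
  set c : Fin k → ℝ := M⁻¹.mulVec N21 with hc
  have hci : 0 < c i := by
    have := hcenter i
    simpa [hinv, hc, Matrix.neg_mulVec] using this
  have hMc : M.mulVec c = N21 := by
    rw [hc, Matrix.mulVec_mulVec, hMinv, Matrix.one_mulVec]
  set s : ℝ := N11 + N21 ⬝ᵥ c with hs
  -- completing the square
  set x : Fin k → ℝ := γ - c with hx
  have hsq : N11 + 2 * (N21 ⬝ᵥ γ) + γ ⬝ᵥ N22.mulVec γ = s - x ⬝ᵥ M.mulVec x := by
    have h1 : x ⬝ᵥ M.mulVec x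
        = γ ⬝ᵥ M.mulVec γ - γ ⬝ᵥ N21 - N21 ⬝ᵥ γ + c ⬝ᵥ N21 := by
      have e1 : c ⬝ᵥ M.mulVec γ = γ ⬝ᵥ N21 := by
        rw [hsymm c γ, hMc]
      have e2 : γ ⬝ᵥ M.mulVec c = γ ⬝ᵥ N21 := by rw [hMc]
      have e3 : c ⬝ᵥ M.mulVec c = c ⬝ᵥ N21 := by rw [hMc]
      rw [hx]
      rw [Matrix.mulVec_sub, dotProduct_sub, sub_dotProduct,
        sub_dotProduct, e1, e2, e3]
      rw [dotProduct_comm N21 γ]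
      ring
    have h2 : γ ⬝ᵥ M.mulVec γ = - (γ ⬝ᵥ N22.mulVec γ) := by
      simp [hMdef, Matrix.neg_mulVec]
    rw [hs, h1, h2]
    have : γ ⬝ᵥ N21 = N21 ⬝ᵥ γ := dotProduct_comm _ _
    have h3 : N21 ⬝ᵥ c = c ⬝ᵥ N21 := dotProduct_comm _ _
    rw [this, h3]; ring
  have hxMx : x ⬝ᵥ M.mulVec x ≤ s := by
    rw [hsq] at hγ; linarith
  -- Cauchy-Schwarz style bound
  set u : Fin k → ℝ := M⁻¹.mulVec (Pi.single i 1) with hu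
  have hMu : M.mulVec u = Pi.single i 1 := by
    rw [hu, Matrix.mulVec_mulVec, hMinv, Matrix.one_mulVec]
  have hui : u i = M⁻¹ i i := by
    simp [hu, Matrix.mulVec, dotProduct, Pi.single_apply]
  have hd : 0 < M⁻¹ i i := by
    have hne : (Pi.single i 1 : Fin k → ℝ) ≠ 0 := by
      intro h
      have := congrFun h i
      simp at this
    have := hM.inv.dotProduct_mulVec_pos (x := (Pi.single i 1 : Fin k → ℝ)) hne
    have h2 : (Pi.single i 1 : Fin k → ℝ) ⬝ᵥ M⁻¹.mulVec (Pi.single i 1) = M⁻¹ i i := by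
      simp [dotProduct, Matrix.mulVec, Pi.single_apply, Finset.sum_ite_eq]
    simp only [star_trivial] at this
    rw [h2] at this
    simpa using this
  set d : ℝ := M⁻¹ i i with hdd
  have key : x i ^ 2 ≤ d * (x ⬝ᵥ M.mulVec x) := by
    set α : ℝ := x i / d with hα
    have hy : 0 ≤ (x - α • u) ⬝ᵥ M.mulVec (x - α • u) := by
      rcases eq_or_ne (x - α • u) 0 with h | h
      · rw [h]; simp
      · have := hM.dotProduct_mulVec_pos h
        simp only [star_trivial] at this
        exact le_of_lt (by simpa using this)
    have hux : u ⬝ᵥ M.mulVec x = x i := by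
      rw [hsymm u x, hMu]
      simp [dotProduct, Pi.single_apply]
    have hxu : x ⬝ᵥ M.mulVec u = x i := by rw [hsymm x u]; exact hux
    have huu : u ⬝ᵥ M.mulVec u = d := by
      rw [hMu]
      simp [dotProduct, Pi.single_apply, hui, hdd]
    have hexp : (x - α • u) ⬝ᵥ M.mulVec (x - α • u)
        = x ⬝ᵥ M.mulVec x - 2 * α * x i + α ^ 2 * d := by
      simp only [Matrix.mulVec_sub, dotProduct_sub, sub_dotProduct,
        Matrix.mulVec_smul, dotProduct_smul, smul_dotProduct,
        hux, hxu, huu, smul_eq_mul]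
      ring
    rw [hexp] at hy
    have : α * d = x i := by
      rw [hα]; field_simp
    nlinarith [hy, this]
  -- use hcond
  have hcnd : s ≤ c i ^ 2 / d := by
    have := hcond i
    have e1 : N22⁻¹.mulVec N21 = -c := by rw [hinv, Matrix.neg_mulVec, hc]
    have e2 : N22⁻¹ i i = -d := by rw [hinv]; simp [hdd]
    rw [e1, e2] at this
    have e3 : N21 ⬝ᵥ (-c) = -(N21 ⬝ᵥ c) := by simp
    rw [e3] at this
    simp only [Pi.neg_apply, neg_sq, div_neg] at this
    rw [hs]
    linarith
  have hfin : x i ^ 2 ≤ c i ^ 2 := by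
    have h1 : d * (x ⬝ᵥ M.mulVec x) ≤ d * s := by
      exact mul_le_mul_of_nonneg_left hxMx (le_of_lt hd)
    have h2 : d * s ≤ c i ^ 2 := by
      calc d * s ≤ d * (c i ^ 2 / d) := mul_le_mul_of_nonneg_left hcnd (le_of_lt hd)
      _ = c i ^ 2 := by field_simp
    linarith
  have hxi : γ i = x i + c i := by simp [hx]
  nlinarith [hfin, hci, hxi]
end
end

section
/- Let φ₁,…,φ_k : ℝⁿ → ℝ be convex functions and let b(z) := (φ₁(z),…,φ_k(z))ᵀ. Let M ∈ ℝ^{k×k} be positive definite and suppose M·b(z) ≥ 0 elementwise for all z ∈ ℝⁿ. Let c ≥ 0. Then the function z ↦ 2·sqrt(c · b(z)ᵀ M b(z)) is convex on ℝⁿ. -/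
open Matrix

noncomputable section

section Aux

variable {k : ℕ} {M : Matrix (Fin k) (Fin k) ℝ}

open scoped MatrixOrder in
/-- Square root of a positive semidefinite matrix (replacement for the removed API). -/
def Matrix.PosSemidef.sqrt (_hM : M.PosSemidef) : Matrix (Fin k) (Fin k) ℝ := CFC.sqrt M

open scoped MatrixOrder in
lemma Matrix.PosSemidef.sqrt_mul_self (hM : M.PosSemidef) : hM.sqrt * hM.sqrt = M :=
  CFC.sqrt_mul_sqrt_self M hM.nonneg

open scoped MatrixOrder in
lemma Matrix.PosSemidef.posSemidef_sqrt (hM : M.PosSemidef) : hM.sqrt.PosSemidef :=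
  (CFC.sqrt_nonneg M).posSemidef

/-- Monotonicity of the quadratic form on the region where `M u ≥ 0`. -/
lemma quad_mono (hM : M.PosSemidef) (hMsym : Mᵀ = M)
    {u v : Fin k → ℝ} (hu : ∀ i, u i ≤ v i) (hMu : ∀ i, 0 ≤ M.mulVec u i) :
    u ⬝ᵥ M.mulVec u ≤ v ⬝ᵥ M.mulVec v := by
  have hdecomp : v = u + (v - u) := by ring
  set d := v - u with hd
  have hdnn : ∀ i, 0 ≤ d i := fun i => by
    simp only [hd, Pi.sub_apply, sub_nonneg]; exact hu i
  have h1 : 0 ≤ d ⬝ᵥ M.mulVec u := by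
    apply Finset.sum_nonneg
    intro i _
    exact mul_nonneg (hdnn i) (hMu i)
  have h2 : 0 ≤ u ⬝ᵥ M.mulVec d := by
    have : u ⬝ᵥ M.mulVec d = d ⬝ᵥ M.mulVec u := by
      rw [Matrix.dotProduct_mulVec, ← Matrix.mulVec_transpose, hMsym, dotProduct_comm]
    rw [this]; exact h1
  have h3 : 0 ≤ d ⬝ᵥ M.mulVec d := by simpa using hM.dotProduct_mulVec_nonneg d
  calc u ⬝ᵥ M.mulVec u
      ≤ u ⬝ᵥ M.mulVec u + (u ⬝ᵥ M.mulVec d + (d ⬝ᵥ M.mulVec u + d ⬝ᵥ M.mulVec d)) := by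
        linarith
    _ = (u + d) ⬝ᵥ M.mulVec (u + d) := by
        rw [Matrix.mulVec_add, add_dotProduct, dotProduct_add,
          dotProduct_add]
        ring
    _ = v ⬝ᵥ M.mulVec v := by rw [← hdecomp]

/-- `√(wᵀ M w)` as a Euclidean norm of `(sqrt M) w`. -/
lemma sqrt_quad_eq_norm (hM : M.PosSemidef) (w : Fin k → ℝ) :
    Real.sqrt (w ⬝ᵥ M.mulVec w)
      = ‖(WithLp.equiv 2 (Fin k → ℝ)).symm (hM.sqrt.mulVec w)‖ := by
  have hsq : hM.sqrt * hM.sqrt = M := hM.sqrt_mul_self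
  have hsym : hM.sqrtᵀ = hM.sqrt := hM.posSemidef_sqrt.1
  have key : w ⬝ᵥ M.mulVec w = (hM.sqrt.mulVec w) ⬝ᵥ (hM.sqrt.mulVec w) := by
    have : (hM.sqrt.mulVec w) ⬝ᵥ (hM.sqrt.mulVec w) = w ⬝ᵥ M.mulVec w := by
      rw [dotProduct_comm, Matrix.dotProduct_mulVec, ← Matrix.mulVec_transpose, hsym,
        Matrix.mulVec_mulVec, hsq, dotProduct_comm]
    exact this.symm
  rw [key, EuclideanSpace.norm_eq]
  congr 1
  simp [dotProduct, sq]

end Aux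

/-- If the φᵢ are convex, M is positive definite,
M·b(z) ≥ 0 elementwise for all z (where b(z) = (φ₁(z),…,φ_k(z))), and c ≥ 0,
then z ↦ 2√(c·b(z)ᵀMb(z)) is convex. -/
theorem stmt11 {n k : ℕ}
    (φ : Fin k → (Fin n → ℝ) → ℝ)
    (hφ : ∀ i, ConvexOn ℝ Set.univ (φ i))
    (M : Matrix (Fin k) (Fin k) ℝ) (hM : M.PosDef)
    (hMb : ∀ z : Fin n → ℝ, ∀ i, 0 ≤ M.mulVec (fun j => φ j z) i)
    (c : ℝ) (hc : 0 ≤ c) :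
    ConvexOn ℝ Set.univ (fun z : Fin n → ℝ =>
      2 * Real.sqrt (c * ((fun j => φ j z) ⬝ᵥ M.mulVec (fun j => φ j z)))) := by
  have hMpsd : M.PosSemidef := hM.posSemidef
  have hMsym : Mᵀ = M := hM.1
  set b : (Fin n → ℝ) → (Fin k → ℝ) := fun z j => φ j z with hb
  -- the core function
  have hf : ConvexOn ℝ Set.univ (fun z => Real.sqrt (b z ⬝ᵥ M.mulVec (b z))) := by
    refine ⟨convex_univ, ?_⟩
    intro x _ y _ a s ha hs habs
    set u := b (a • x + s • y) with hu
    set v := a • b x + s • b y with hv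
    have huv : ∀ i, u i ≤ v i := by
      intro i
      have := (hφ i).2 (Set.mem_univ x) (Set.mem_univ y) ha hs habs
      simpa [hu, hv, hb] using this
    have hstep1 : u ⬝ᵥ M.mulVec u ≤ v ⬝ᵥ M.mulVec v :=
      quad_mono hMpsd hMsym huv (hMb _)
    have hstep2 : Real.sqrt (v ⬝ᵥ M.mulVec v)
        ≤ a * Real.sqrt (b x ⬝ᵥ M.mulVec (b x)) + s * Real.sqrt (b y ⬝ᵥ M.mulVec (b y)) := by
      rw [sqrt_quad_eq_norm hMpsd, sqrt_quad_eq_norm hMpsd, sqrt_quad_eq_norm hMpsd]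
      have : (WithLp.equiv 2 (Fin k → ℝ)).symm (hMpsd.sqrt.mulVec v)
          = a • (WithLp.equiv 2 (Fin k → ℝ)).symm (hMpsd.sqrt.mulVec (b x))
            + s • (WithLp.equiv 2 (Fin k → ℝ)).symm (hMpsd.sqrt.mulVec (b y)) := by
        simp [hv, Matrix.mulVec_add, Matrix.mulVec_smul]
      rw [this]
      calc ‖a • (WithLp.equiv 2 (Fin k → ℝ)).symm (hMpsd.sqrt.mulVec (b x))
            + s • (WithLp.equiv 2 (Fin k → ℝ)).symm (hMpsd.sqrt.mulVec (b y))‖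
          ≤ ‖a • (WithLp.equiv 2 (Fin k → ℝ)).symm (hMpsd.sqrt.mulVec (b x))‖
            + ‖s • (WithLp.equiv 2 (Fin k → ℝ)).symm (hMpsd.sqrt.mulVec (b y))‖ :=
            norm_add_le _ _
        _ = a * ‖(WithLp.equiv 2 (Fin k → ℝ)).symm (hMpsd.sqrt.mulVec (b x))‖
            + s * ‖(WithLp.equiv 2 (Fin k → ℝ)).symm (hMpsd.sqrt.mulVec (b y))‖ := by
            rw [norm_smul, norm_smul, Real.norm_of_nonneg ha, Real.norm_of_nonneg hs]
    calc Real.sqrt (u ⬝ᵥ M.mulVec u) ≤ Real.sqrt (v ⬝ᵥ M.mulVec v) :=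
          Real.sqrt_le_sqrt hstep1
      _ ≤ _ := hstep2
  -- rescale by 2√c
  have heq : (fun z : Fin n → ℝ =>
      2 * Real.sqrt (c * (b z ⬝ᵥ M.mulVec (b z))))
      = fun z => (2 * Real.sqrt c) * Real.sqrt (b z ⬝ᵥ M.mulVec (b z)) := by
    funext z
    rw [Real.sqrt_mul hc]
    ring
  have h2c : 0 ≤ 2 * Real.sqrt c := by positivity
  have := hf.smul h2c
  simp only [smul_eq_mul] at this
  rw [show (fun z : Fin n → ℝ =>
      2 * Real.sqrt (c * ((fun j => φ j z) ⬝ᵥ M.mulVec (fun j => φ j z))))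
      = fun z => (2 * Real.sqrt c) * Real.sqrt (b z ⬝ᵥ M.mulVec (b z)) from heq]
  exact this
end
end
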